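/- arXiv:1907.04006 — 3 statements merged into one kernel-verified Lean document; each statement's English description precedes it below -/
import Mathlib

section
/- If a probability measure ν ≪ μ with J ν-integrable and D_KL(ν‖μ) < ∞ satisfies ∫ J dν + (1/ρ)·D_KL(ν‖μ) = −(1/ρ)·log Z, then ν equals the Gibbs measure μ⋆; that is, the minimizer of the free-energy functional is unique and equal to μ⋆. -/
open MeasureTheory Real

/-- Kullback–Leibler divergence `D_KL(ν‖μ) = ∫ log(dν/dμ) dν`. -/
noncomputable def klDiv' {Ω : Type*} [MeasurableSpace Ω] (ν μ : Measure Ω) : ℝ :=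
  ∫ x, Real.log (ν.rnDeriv μ x).toReal ∂ν

/-- Pointwise Gibbs inequality: for `0 ≤ a` and `0 < b`,
`a * log (a/b) - a + b ≥ 0`, with equality iff `a = b`. -/
lemma gibbs_pointwise (a b : ℝ) (ha : 0 ≤ a) (hb : 0 < b) :
    0 ≤ a * Real.log (a / b) - a + b ∧
      (a * Real.log (a / b) - a + b = 0 → a = b) := by
  rcases eq_or_ne a b with rfl | hab
  · rw [div_self hb.ne', Real.log_one]
    refine ⟨le_of_eq (by ring), fun _ => rfl⟩
  · have hstrict : 0 < a * Real.log (a / b) - a + b := by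
      rcases ha.eq_or_lt with rfl | ha'
      · simpa using hb
      · have hba : b / a ≠ 1 := by
          intro h
          exact hab ((div_eq_one_iff_eq ha'.ne').mp h).symm
        have key : Real.log (b / a) < b / a - 1 :=
          Real.log_lt_sub_one_of_pos (div_pos hb ha') hba
        rw [Real.log_div hb.ne' ha'.ne'] at key
        rw [Real.log_div (by positivity) hb.ne']
        have hmul : a * (b / a - 1) = b - a := by field_simp
        nlinarith [mul_lt_mul_of_pos_left key ha']
    exact ⟨hstrict.le, fun h => absurd h hstrict.ne'⟩

/-- Uniqueness of the minimizer of the free-energy functional: if a probability measure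
`ν ≪ μ` with `J` `ν`-integrable and finite KL divergence attains the free-energy bound with
equality, then `ν` is the Gibbs measure `μ⋆` with `dμ⋆ = (exp(−ρJ)/Z) dμ`. -/
theorem free_energy_minimizer_unique {Ω : Type*} [MeasurableSpace Ω]
    (μ : Measure Ω) [IsProbabilityMeasure μ]
    (J : Ω → ℝ) (hJ : Measurable J) (ρ : ℝ) (hρ : 0 < ρ)
    (hZint : Integrable (fun x => Real.exp (-ρ * J x)) μ)
    (hZpos : 0 < ∫ x, Real.exp (-ρ * J x) ∂μ)
    (ν : Measure Ω) [IsProbabilityMeasure ν] (hνμ : ν ≪ μ)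
    (hJν : Integrable J ν)
    (hKL : Integrable (fun x => Real.log (ν.rnDeriv μ x).toReal) ν)
    (heq : (∫ x, J x ∂ν) + (1 / ρ) * klDiv' ν μ =
      -(1 / ρ) * Real.log (∫ x, Real.exp (-ρ * J x) ∂μ)) :
    ν = μ.withDensity
      (fun x => ENNReal.ofReal (Real.exp (-ρ * J x) / ∫ y, Real.exp (-ρ * J y) ∂μ)) := by
  set Z : ℝ := ∫ x, Real.exp (-ρ * J x) ∂μ with hZdef
  set g : Ω → ℝ := fun x => Real.exp (-ρ * J x) / Z with hgdef
  have hg_pos : ∀ x, 0 < g x := fun x => div_pos (Real.exp_pos _) hZpos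
  set f : Ω → ℝ := fun x => (ν.rnDeriv μ x).toReal with hfdef
  have hf_nonneg : ∀ x, 0 ≤ f x := fun x => ENNReal.toReal_nonneg
  set φ : Ω → ℝ := fun x => Real.log (f x / g x) with hφdef
  -- log g x = -ρ J x - log Z
  have hlogg : ∀ x, Real.log (g x) = -ρ * J x - Real.log Z := by
    intro x
    rw [hgdef]
    rw [Real.log_div (Real.exp_ne_zero _) hZpos.ne', Real.log_exp]
  -- ν-a.e., φ = log f + ρ J + log Z
  have h_pos : ∀ᵐ x ∂ν, 0 < ν.rnDeriv μ x := Measure.rnDeriv_pos hνμ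
  have h_lt_top : ∀ᵐ x ∂ν, ν.rnDeriv μ x < ⊤ := hνμ.ae_le (Measure.rnDeriv_lt_top ν μ)
  have hφν_eq : φ =ᵐ[ν] fun x => Real.log (f x) + (ρ * J x + Real.log Z) := by
    filter_upwards [h_pos, h_lt_top] with x hx hx'
    have hfx : 0 < f x := ENNReal.toReal_pos hx.ne' hx'.ne
    rw [hφdef]
    simp only
    rw [Real.log_div hfx.ne' (hg_pos x).ne', hlogg x]
    ring
  have hφν_int : Integrable φ ν :=
    ((hKL.add ((hJν.const_mul ρ).add (integrable_const (Real.log Z)))).congr hφν_eq.symm)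
  -- ∫ φ dν = 0
  have hφν_zero : ∫ x, φ x ∂ν = 0 := by
    have e1 : ∫ x, (Real.log (f x) + (ρ * J x + Real.log Z)) ∂ν =
        (∫ x, Real.log (f x) ∂ν) + ∫ x, (ρ * J x + Real.log Z) ∂ν :=
      integral_add hKL ((hJν.const_mul ρ).add (integrable_const (Real.log Z)))
    have e2 : ∫ x, (ρ * J x + Real.log Z) ∂ν =
        (∫ x, ρ * J x ∂ν) + ∫ x, (Real.log Z : ℝ) ∂ν :=
      integral_add (hJν.const_mul ρ) (integrable_const _)
    rw [integral_congr_ae hφν_eq, e1, e2, integral_const_mul, integral_const]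
    simp only [measure_univ, probReal_univ, ENNReal.toReal_one, smul_eq_mul, one_mul]
    have hK : klDiv' ν μ = ∫ x, Real.log (ν.rnDeriv μ x).toReal ∂ν := rfl
    have := heq
    rw [← hK]
    field_simp at this ⊢
    linarith
  -- integrability facts over μ
  have hfφ_int : Integrable (fun x => f x * φ x) μ := by
    have := (integrable_rnDeriv_smul_iff hνμ).mpr hφν_int
    simpa [hfdef, smul_eq_mul] using this
  have hf_int : Integrable f μ := Measure.integrable_toReal_rnDeriv
  have hg_int : Integrable g μ := hZint.div_const Z
  set h : Ω → ℝ := fun x => f x * φ x - f x + g x with hhdef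
  have hh_int : Integrable h μ := (hfφ_int.sub hf_int).add hg_int
  have hh_nonneg : ∀ x, 0 ≤ h x := fun x =>
    (gibbs_pointwise (f x) (g x) (hf_nonneg x) (hg_pos x)).1
  -- ∫ h dμ = 0
  have hfφ_eq : ∫ x, f x * φ x ∂μ = ∫ x, φ x ∂ν := by
    have := integral_rnDeriv_smul hνμ (f := φ)
    simpa [hfdef, smul_eq_mul] using this
  have hf_eq : ∫ x, f x ∂μ = 1 := by
    rw [hfdef]
    simp [Measure.integral_toReal_rnDeriv hνμ]
  have hg_eq : ∫ x, g x ∂μ = 1 := by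
    rw [hgdef]
    simp only [integral_div]
    rw [← hZdef, div_self hZpos.ne']
  have hh_zero : ∫ x, h x ∂μ = 0 := by
    have e1 : ∫ x, (f x * φ x - f x) ∂μ = (∫ x, f x * φ x ∂μ) - ∫ x, f x ∂μ :=
      integral_sub hfφ_int hf_int
    have e2 : ∫ x, ((f x * φ x - f x) + g x) ∂μ =
        (∫ x, (f x * φ x - f x) ∂μ) + ∫ x, g x ∂μ :=
      integral_add (hfφ_int.sub hf_int) hg_int
    rw [hhdef]
    simp only
    rw [e2, e1, hfφ_eq, hφν_zero, hf_eq, hg_eq]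
    ring
  have hh_ae : h =ᵐ[μ] 0 :=
    (integral_eq_zero_iff_of_nonneg hh_nonneg hh_int).mp hh_zero
  have hfg : ∀ᵐ x ∂μ, f x = g x := by
    filter_upwards [hh_ae] with x hx
    exact (gibbs_pointwise (f x) (g x) (hf_nonneg x) (hg_pos x)).2 hx
  -- conclude
  have hrn : ν.rnDeriv μ =ᵐ[μ] fun x => ENNReal.ofReal (g x) := by
    filter_upwards [hfg, Measure.rnDeriv_lt_top ν μ] with x hx hx'
    rw [← hx, hfdef]
    exact (ENNReal.ofReal_toReal hx'.ne).symm
  calc ν = μ.withDensity (ν.rnDeriv μ) := (Measure.withDensity_rnDeriv_eq ν μ hνμ).symm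
    _ = μ.withDensity (fun x => ENNReal.ofReal (g x)) := withDensity_congr_ae hrn
end

section
/- Let H be a separable real Hilbert space with Hilbert basis (e_j)_{j∈ℕ}, let (λ_j)_{j∈ℕ} be nonnegative reals with Σ_j λ_j < ∞, let t ≥ 0, and let (ξ_j)_{j∈ℕ} be independent real-valued random variables on a probability space, each Gaussian with mean 0 and variance t. Then the partial sums S_n := Σ_{j≤n} √λ_j · ξ_j · e_j converge in L²(Ω; H) to a random variable W, and E‖W‖² = t · Σ_j λ_j. (This is the series expansion of a Q-Wiener process at a fixed time, where Q e_j = λ_j e_j is trace class.) -/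
open MeasureTheory ProbabilityTheory Filter Topology
open scoped NNReal

open scoped ENNReal Real

lemma qw_integral_sq_mul_exp {b : ℝ} (hb : 0 < b) :
    ∫ x : ℝ, x ^ 2 * Real.exp (-b * x ^ 2) = (2 * b)⁻¹ * Real.sqrt (π / b) := by
  have hsq : Integrable (fun x : ℝ => x ^ 2 * Real.exp (-b * x ^ 2)) := by
    have h := integrable_rpow_mul_exp_neg_mul_sq hb (s := ((2 : ℕ) : ℝ)) (by norm_num)
    simpa [Real.rpow_natCast] using h
  have hderiv : ∀ x : ℝ, HasDerivAt (fun y : ℝ => y * Real.exp (-b * y ^ 2))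
      (Real.exp (-b * x ^ 2) - 2 * b * (x ^ 2 * Real.exp (-b * x ^ 2))) x := by
    intro x
    have h1 : HasDerivAt (fun y : ℝ => -b * y ^ 2) (-b * (2 * x ^ 1)) x :=
      (hasDerivAt_pow 2 x).const_mul (-b)
    have h2 : HasDerivAt (fun y : ℝ => y * Real.exp (-b * y ^ 2))
        (1 * Real.exp (-b * x ^ 2) + id x * (Real.exp (-b * x ^ 2) * (-b * (2 * x ^ 1)))) x :=
      (hasDerivAt_id x).mul h1.exp
    convert h2 using 1
    simp only [pow_one, id_eq]
    ring
  have hint : Integrable (fun x : ℝ =>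
      Real.exp (-b * x ^ 2) - 2 * b * (x ^ 2 * Real.exp (-b * x ^ 2))) :=
    (integrable_exp_neg_mul_sq hb).sub (hsq.const_mul _)
  have htop : Tendsto (fun x : ℝ => x * Real.exp (-b * x ^ 2)) atTop (𝓝 0) := by
    have hexp : Tendsto (fun x : ℝ => Real.exp (-(1/2) * x)) atTop (𝓝 0) :=
      Real.tendsto_exp_atBot.comp (tendsto_id.const_mul_atTop_of_neg (by norm_num))
    have h0 : Tendsto (fun x : ℝ => x ^ (1:ℝ) * Real.exp (-b * x ^ 2)) atTop (𝓝 0) :=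
      (rpow_mul_exp_neg_mul_sq_isLittleO_exp_neg hb 1).isBigO.trans_tendsto hexp
    exact h0.congr fun x => by rw [Real.rpow_one]
  have hbot : Tendsto (fun x : ℝ => x * Real.exp (-b * x ^ 2)) atBot (𝓝 0) := by
    have h := (htop.comp tendsto_neg_atBot_atTop).neg
    simp only [neg_zero] at h
    refine h.congr fun x => ?_
    simp only [Function.comp_apply, neg_sq]
    ring
  have key := integral_of_hasDerivAt_of_tendsto hderiv hint hbot htop
  rw [integral_sub (integrable_exp_neg_mul_sq hb) (hsq.const_mul _), integral_const_mul,
    integral_gaussian, sub_zero] at key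
  have h2b : (2 * b) ≠ 0 := by positivity
  have h' : Real.sqrt (π / b) = 2 * b * ∫ x : ℝ, x ^ 2 * Real.exp (-b * x ^ 2) := by
    linarith [key]
  rw [h', inv_mul_cancel_left₀ h2b]

lemma qw_pdf_eq {v : ℝ≥0} (x : ℝ) :
    gaussianPDFReal 0 v x
      = (Real.sqrt (2 * π * v))⁻¹ * Real.exp (-(2 * (v:ℝ))⁻¹ * x ^ 2) := by
  rw [gaussianPDFReal]
  congr 1
  rw [sub_zero]
  congr 1
  rw [div_eq_mul_inv]
  ring

lemma qw_gaussianReal_eq_withDensity {v : ℝ≥0} (hv : v ≠ 0) :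
    gaussianReal 0 v
      = (volume : Measure ℝ).withDensity
          (fun x => ((gaussianPDFReal 0 v x).toNNReal : ℝ≥0∞)) := by
  rw [gaussianReal_of_var_ne_zero 0 hv]
  rfl

lemma qw_integrable_sq_gaussianReal (v : ℝ≥0) :
    Integrable (fun x : ℝ => x ^ 2) (gaussianReal 0 v) := by
  by_cases hv : v = 0
  · subst hv
    rw [gaussianReal_zero_var]
    refine ⟨(measurable_id.pow_const 2).aestronglyMeasurable, ?_⟩
    rw [HasFiniteIntegral]
    rw [lintegral_dirac]
    simp
  · have hv' : (0:ℝ) < v := lt_of_le_of_ne v.coe_nonneg (by exact_mod_cast (Ne.symm hv))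
    have hb : (0:ℝ) < (2 * (v:ℝ))⁻¹ := by positivity
    rw [qw_gaussianReal_eq_withDensity hv,
      integrable_withDensity_iff_integrable_smul
        ((measurable_gaussianPDFReal 0 v).real_toNNReal)]
    have : (fun x : ℝ => ((gaussianPDFReal 0 v x).toNNReal : ℝ≥0) • x ^ 2)
        = fun x : ℝ => (Real.sqrt (2 * π * v))⁻¹ * (x ^ 2 * Real.exp (-(2 * (v:ℝ))⁻¹ * x ^ 2)) := by
      funext x
      rw [NNReal.smul_def, smul_eq_mul,
        Real.coe_toNNReal _ (gaussianPDFReal_nonneg 0 v x), qw_pdf_eq]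
      ring
    rw [this]
    have h := integrable_rpow_mul_exp_neg_mul_sq hb (s := ((2 : ℕ) : ℝ)) (by norm_num)
    refine Integrable.const_mul ?_ _
    simpa [Real.rpow_natCast] using h

lemma qw_integral_sq_gaussianReal (v : ℝ≥0) :
    ∫ x, x ^ 2 ∂(gaussianReal 0 v) = (v : ℝ) := by
  by_cases hv : v = 0
  · subst hv
    rw [gaussianReal_zero_var, integral_dirac]
    simp
  · have hv' : (0:ℝ) < v := lt_of_le_of_ne v.coe_nonneg (by exact_mod_cast (Ne.symm hv))
    set b : ℝ := (2 * (v:ℝ))⁻¹ with hbdef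
    have hb : (0:ℝ) < b := by positivity
    rw [qw_gaussianReal_eq_withDensity hv,
      integral_withDensity_eq_integral_smul
        ((measurable_gaussianPDFReal 0 v).real_toNNReal)]
    have heq : (fun x : ℝ => ((gaussianPDFReal 0 v x).toNNReal : ℝ≥0) • x ^ 2)
        = fun x : ℝ => (Real.sqrt (2 * π * v))⁻¹ * (x ^ 2 * Real.exp (-b * x ^ 2)) := by
      funext x
      rw [NNReal.smul_def, smul_eq_mul,
        Real.coe_toNNReal _ (gaussianPDFReal_nonneg 0 v x), qw_pdf_eq]
      ring
    rw [heq, integral_const_mul, qw_integral_sq_mul_exp hb]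
    have h2b : (2 * b)⁻¹ = (v : ℝ) := by
      rw [hbdef]
      field_simp
    have hpb : π / b = 2 * π * (v:ℝ) := by
      rw [hbdef]
      field_simp
    rw [h2b, hpb]
    have hs : (0:ℝ) < Real.sqrt (2 * π * v) := Real.sqrt_pos.mpr (by positivity)
    field_simp

lemma qw_integral_norm_sq {H Ω : Type*} [NormedAddCommGroup H] [InnerProductSpace ℝ H]
    [MeasurableSpace Ω] {P : Measure Ω} {f : Ω → H} (hf : MemLp f 2 P) :
    ∫ ω, ‖f ω‖ ^ 2 ∂P = ‖hf.toLp f‖ ^ 2 := by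
  have h1 : (inner ℝ (hf.toLp f) (hf.toLp f) : ℝ) = ∫ ω, (inner ℝ (f ω) (f ω) : ℝ) ∂P := by
    rw [MeasureTheory.L2.inner_def]
    refine integral_congr_ae ?_
    filter_upwards [hf.coeFn_toLp] with ω hω
    rw [hω]
  rw [← real_inner_self_eq_norm_sq, h1]
  refine integral_congr_ae (Filter.Eventually.of_forall fun ω => ?_)
  simp only [real_inner_self_eq_norm_sq]

/-- Series expansion of a Q-Wiener process at a fixed time: if `(e_j)` is a Hilbert basis
of a separable Hilbert space `H`, `(λ_j)` are nonnegative summable reals (the eigenvalues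
of the trace-class covariance `Q`), and `(ξ_j)` are independent real Gaussians with mean
`0` and variance `t`, then the partial sums `S_n = Σ_{j<n} √λ_j · ξ_j · e_j` converge in
`L²(Ω; H)` to some `W` with `E‖W‖² = t · Σ_j λ_j`. -/
theorem qWiener_series_convergence
    {H : Type*} [NormedAddCommGroup H] [InnerProductSpace ℝ H] [CompleteSpace H]
    [SecondCountableTopology H]
    {Ω : Type*} [MeasurableSpace Ω] (P : Measure Ω) [IsProbabilityMeasure P]
    (e : HilbertBasis ℕ ℝ H)
    (lam : ℕ → ℝ) (hlam : ∀ j, 0 ≤ lam j) (hsum : Summable lam)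
    (t : ℝ≥0)
    (ξ : ℕ → Ω → ℝ) (hmeas : ∀ j, Measurable (ξ j))
    (hindep : iIndepFun ξ P)
    (hgauss : ∀ j, Measure.map (ξ j) P = gaussianReal 0 t) :
    ∃ W : Ω → H, AEStronglyMeasurable W P ∧
      Tendsto (fun n => ∫ ω,
          ‖(∑ j ∈ Finset.range n, (Real.sqrt (lam j) * ξ j ω) • (e j : H)) - W ω‖ ^ 2 ∂P)
        atTop (nhds 0) ∧
      ∫ ω, ‖W ω‖ ^ 2 ∂P = (t : ℝ) * ∑' j, lam j := by
  classical
  -- second-moment facts about each ξ j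
  have hsq_int : ∀ j, Integrable (fun ω => ξ j ω ^ 2) P := by
    intro j
    have h1 : Integrable (fun x : ℝ => x ^ 2) (Measure.map (ξ j) P) := by
      rw [hgauss j]; exact qw_integrable_sq_gaussianReal t
    have h2 := (integrable_map_measure h1.aestronglyMeasurable
      (hmeas j).aemeasurable).mp h1
    simpa [Function.comp_def] using h2
  have hsq_eq : ∀ j, ∫ ω, ξ j ω ^ 2 ∂P = (t : ℝ) := by
    intro j
    have h1 : AEStronglyMeasurable (fun x : ℝ => x ^ 2) (Measure.map (ξ j) P) :=
      (measurable_id.pow_const 2).aestronglyMeasurable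
    have h2 := integral_map (hmeas j).aemeasurable h1
    rw [← h2, hgauss j, qw_integral_sq_gaussianReal]
  -- each scalar coefficient squared
  have hc_int : ∀ j, Integrable (fun ω => (Real.sqrt (lam j) * ξ j ω) ^ 2) P := by
    intro j
    simpa [mul_pow, Real.sq_sqrt (hlam j)] using (hsq_int j).const_mul (lam j)
  have hc_eq : ∀ j, ∫ ω, (Real.sqrt (lam j) * ξ j ω) ^ 2 ∂P = lam j * t := by
    intro j
    have h : (fun ω => (Real.sqrt (lam j) * ξ j ω) ^ 2)
        = fun ω => lam j * ξ j ω ^ 2 := by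
      funext ω; rw [mul_pow, Real.sq_sqrt (hlam j)]
    rw [h, integral_const_mul, hsq_eq j]
  -- membership in L²
  have hgmem : ∀ j, MemLp (fun ω => (Real.sqrt (lam j) * ξ j ω) • (e j : H)) 2 P := by
    intro j
    have hξj : MemLp (ξ j) 2 P :=
      (memLp_two_iff_integrable_sq (hmeas j).aestronglyMeasurable).2 (hsq_int j)
    have hcmem : MemLp (fun ω => Real.sqrt (lam j) * ξ j ω) 2 P := hξj.const_mul _
    have h := (ContinuousLinearMap.toSpanSingleton ℝ (e j : H)).comp_memLp' hcmem
    simpa [ContinuousLinearMap.toSpanSingleton_apply, Function.comp_def] using h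
  have hfin : ∀ s : Finset ℕ,
      MemLp (fun ω => ∑ j ∈ s, (Real.sqrt (lam j) * ξ j ω) • (e j : H)) 2 P :=
    fun s => memLp_finset_sum s fun j _ => hgmem j
  -- Parseval for finite sums
  have hnorm : ∀ (s : Finset ℕ) (ω : Ω),
      ‖∑ j ∈ s, (Real.sqrt (lam j) * ξ j ω) • (e j : H)‖ ^ 2
        = ∑ j ∈ s, (Real.sqrt (lam j) * ξ j ω) ^ 2 := by
    intro s ω
    have h := e.orthonormal.inner_sum (fun j => Real.sqrt (lam j) * ξ j ω)
      (fun j => Real.sqrt (lam j) * ξ j ω) s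
    rw [← real_inner_self_eq_norm_sq, h]
    simp [sq]
  -- integral of the squared norm of a finite block
  have hintegral : ∀ s : Finset ℕ,
      ∫ ω, ‖∑ j ∈ s, (Real.sqrt (lam j) * ξ j ω) • (e j : H)‖ ^ 2 ∂P
        = (t : ℝ) * ∑ j ∈ s, lam j := by
    intro s
    have h1 : (fun ω => ‖∑ j ∈ s, (Real.sqrt (lam j) * ξ j ω) • (e j : H)‖ ^ 2)
        = fun ω => ∑ j ∈ s, (Real.sqrt (lam j) * ξ j ω) ^ 2 := by
      funext ω; exact hnorm s ω
    rw [h1, integral_finset_sum s fun j _ => hc_int j]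
    rw [Finset.sum_congr rfl fun j _ => hc_eq j, Finset.mul_sum]
    exact Finset.sum_congr rfl fun j _ => mul_comm _ _
  -- the sequence in Lp
  let Ln : ℕ → Lp H 2 P := fun n => (hfin (Finset.range n)).toLp _
  have hLn_norm : ∀ n, ‖Ln n‖ ^ 2 = (t : ℝ) * ∑ j ∈ Finset.range n, lam j := by
    intro n
    rw [← qw_integral_norm_sq (hfin (Finset.range n)), hintegral]
  have hLn_sub : ∀ m n : ℕ, m ≤ n →
      ‖Ln n - Ln m‖ ^ 2 = (t : ℝ) * ∑ j ∈ Finset.Ico m n, lam j := by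
    intro m n hmn
    have hf := (hfin (Finset.range n)).sub (hfin (Finset.range m))
    have h := qw_integral_norm_sq hf
    have h2 : MemLp.toLp _ hf = Ln n - Ln m :=
      MemLp.toLp_sub (hfin (Finset.range n)) (hfin (Finset.range m))
    rw [h2] at h
    rw [← h, ← hintegral (Finset.Ico m n)]
    refine integral_congr_ae (Filter.Eventually.of_forall fun ω => ?_)
    simp only [Pi.sub_apply]
    rw [Finset.sum_Ico_eq_sub _ hmn]
  -- tails
  set tail : ℕ → ℝ := fun N => ∑' k, lam (k + N) with htaildef
  have htail : Tendsto tail atTop (𝓝 0) := tendsto_sum_nat_add lam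
  have hsum_tail : ∀ N, Summable fun k => lam (k + N) :=
    fun N => (summable_nat_add_iff N).2 hsum
  have hblock_le : ∀ N m n : ℕ, N ≤ m → m ≤ n →
      ∑ j ∈ Finset.Ico m n, lam j ≤ tail N := by
    intro N m n hNm hmn
    calc ∑ j ∈ Finset.Ico m n, lam j
        ≤ ∑ j ∈ Finset.Ico N n, lam j :=
          Finset.sum_le_sum_of_subset_of_nonneg
            (Finset.Ico_subset_Ico hNm le_rfl) (fun j _ _ => hlam j)
      _ = ∑ k ∈ Finset.range (n - N), lam (N + k) := by
          rw [Finset.sum_Ico_eq_sum_range]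
      _ = ∑ k ∈ Finset.range (n - N), lam (k + N) := by
          exact Finset.sum_congr rfl fun k _ => by rw [add_comm]
      _ ≤ tail N := Summable.sum_le_tsum _ (fun k _ => hlam _) (hsum_tail N)
  -- Cauchy
  have hdist : ∀ n m N : ℕ, N ≤ n → N ≤ m →
      dist (Ln n) (Ln m) ≤ Real.sqrt ((t : ℝ) * tail N) := by
    have key : ∀ N m n : ℕ, N ≤ m → m ≤ n →
        dist (Ln n) (Ln m) ≤ Real.sqrt ((t : ℝ) * tail N) := by
      intro N m n hNm hmn
      rw [dist_eq_norm, ← Real.sqrt_sq (norm_nonneg (Ln n - Ln m)), hLn_sub m n hmn]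
      refine Real.sqrt_le_sqrt ?_
      exact mul_le_mul_of_nonneg_left (hblock_le N m n hNm hmn) t.coe_nonneg
    intro n m N hn hm
    rcases le_total m n with h | h
    · exact key N m n hm h
    · rw [dist_comm]; exact key N n m hn h
  have hcauchy : CauchySeq Ln := by
    refine cauchySeq_of_le_tendsto_0 _ hdist ?_
    have h1 : Tendsto (fun N => (t : ℝ) * tail N) atTop (𝓝 ((t : ℝ) * 0)) :=
      htail.const_mul _
    rw [mul_zero] at h1
    have h2 := (Real.continuous_sqrt.tendsto 0).comp h1
    rw [Real.sqrt_zero] at h2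
    exact h2
  obtain ⟨L, hL⟩ := cauchySeq_tendsto_of_complete hcauchy
  refine ⟨⇑L, Lp.aestronglyMeasurable L, ?_, ?_⟩
  · -- convergence of the integrals
    have heq : ∀ n, ∫ ω,
        ‖(∑ j ∈ Finset.range n, (Real.sqrt (lam j) * ξ j ω) • (e j : H)) - L ω‖ ^ 2 ∂P
          = ‖Ln n - L‖ ^ 2 := by
      intro n
      have hf := (hfin (Finset.range n)).sub (Lp.memLp L)
      have h := qw_integral_norm_sq hf
      have h2 : MemLp.toLp _ hf = Ln n - L := by
        rw [MemLp.toLp_sub (hfin (Finset.range n)) (Lp.memLp L), Lp.toLp_coeFn]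
      rw [h2] at h
      rw [← h]
      refine integral_congr_ae (Filter.Eventually.of_forall fun ω => ?_)
      simp only [Pi.sub_apply]
    have h1 : Tendsto (fun n => ‖Ln n - L‖) atTop (𝓝 0) :=
      tendsto_iff_norm_sub_tendsto_zero.mp hL
    have h2 : Tendsto (fun n => ‖Ln n - L‖ ^ 2) atTop (𝓝 0) := by
      have := h1.pow 2
      simpa using this
    exact h2.congr fun n => (heq n).symm
  · -- value of the limit's second moment
    have h1 : ∫ ω, ‖L ω‖ ^ 2 ∂P = ‖L‖ ^ 2 := by
      have h := qw_integral_norm_sq (Lp.memLp L)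
      rwa [Lp.toLp_coeFn] at h
    rw [h1]
    have h2 : Tendsto (fun n => ‖Ln n‖ ^ 2) atTop (𝓝 (‖L‖ ^ 2)) := hL.norm.pow 2
    have h3 : Tendsto (fun n => ‖Ln n‖ ^ 2) atTop (𝓝 ((t : ℝ) * ∑' j, lam j)) := by
      have h4 := (hsum.hasSum.tendsto_sum_nat).const_mul (t : ℝ)
      exact h4.congr fun n => (hLn_norm n).symm
    exact tendsto_nhds_unique h2 h3
end

section
/- Let U and U₁ be separable real Hilbert spaces, let ι : U → U₁ be a Hilbert–Schmidt operator, let (e_j)_{j∈ℕ} be a Hilbert basis of U, and let (ξ_j)_{j∈ℕ} be independent standard real Gaussian random variables (mean 0, variance 1). Then the series Σ_j ξ_j · ι(e_j) converges in L²(Ω; U₁) to a random variable W₁ with E‖W₁‖²_{U₁} = Σ_j ‖ι(e_j)‖²_{U₁} = ‖ι‖²_{HS}. (This underlies the convergence of the cylindrical Wiener series in a larger space U₁ ⊃ U when the inclusion is Hilbert–Schmidt.) -/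
open MeasureTheory ProbabilityTheory Filter Topology
open scoped NNReal

section aux
open Real Set
open scoped ENNReal

lemma myaux_int_sq {b : ℝ} (hb : 0 < b) :
    Integrable fun x : ℝ => x ^ 2 * Real.exp (-b * x ^ 2) := by
  have h := integrable_rpow_mul_exp_neg_mul_sq hb (s := 2) (by norm_num)
  have h2 : ∀ x : ℝ, x ^ (2 : ℝ) = x ^ (2 : ℕ) := fun x => by
    rw [show (2 : ℝ) = ((2 : ℕ) : ℝ) by norm_num, Real.rpow_natCast]
  simpa only [h2] using h

lemma myaux_tendsto_exp_top {b : ℝ} (hb : 0 < b) :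
    Tendsto (fun x : ℝ => Real.exp (-b * x ^ 2)) atTop (nhds 0) :=
  tendsto_exp_atBot.comp
    ((tendsto_pow_atTop two_ne_zero).const_mul_atTop_of_neg (neg_lt_zero.2 hb))

lemma myaux_tendsto_exp_bot {b : ℝ} (hb : 0 < b) :
    Tendsto (fun x : ℝ => Real.exp (-b * x ^ 2)) atBot (nhds 0) := by
  have := (myaux_tendsto_exp_top hb).comp tendsto_neg_atBot_atTop
  simpa [Function.comp_def, neg_sq] using this

lemma myaux_tendsto_mul_exp_top {b : ℝ} (hb : 0 < b) :
    Tendsto (fun x : ℝ => x * Real.exp (-b * x ^ 2)) atTop (nhds 0) := by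
  have h1 : Tendsto (fun x : ℝ => Real.exp (-(1 / 2) * x)) atTop (nhds 0) := by
    apply tendsto_exp_atBot.comp
    exact tendsto_id.const_mul_atTop_of_neg (by norm_num)
  have h := ((rpow_mul_exp_neg_mul_sq_isLittleO_exp_neg hb 1).isBigO).trans_tendsto h1
  have h2 : ∀ᶠ x : ℝ in atTop, x ^ (1 : ℝ) * Real.exp (-b * x ^ 2)
      = x * Real.exp (-b * x ^ 2) := by
    filter_upwards [eventually_ge_atTop (0 : ℝ)] with x hx
    rw [Real.rpow_one]
  exact Tendsto.congr' h2 h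

lemma myaux_tendsto_mul_exp_bot {b : ℝ} (hb : 0 < b) :
    Tendsto (fun x : ℝ => x * Real.exp (-b * x ^ 2)) atBot (nhds 0) := by
  have := ((myaux_tendsto_mul_exp_top hb).comp tendsto_neg_atBot_atTop).neg
  simp only [Function.comp_def, neg_sq, neg_mul, neg_neg, neg_zero] at this
  simpa [neg_mul] using this

lemma myaux_integral_x_exp {b : ℝ} (hb : 0 < b) :
    ∫ x : ℝ, x * Real.exp (-b * x ^ 2) = 0 := by
  have hderiv : ∀ x : ℝ, HasDerivAt (fun x : ℝ => -(2 * b)⁻¹ * Real.exp (-b * x ^ 2))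
      (x * Real.exp (-b * x ^ 2)) x := by
    intro x
    convert (((hasDerivAt_pow 2 x).const_mul (-b)).exp).const_mul (-(2 * b)⁻¹) using 1
    · rfl
    · rfl
    field_simp
    ring
  have htop : Tendsto (fun x : ℝ => -(2 * b)⁻¹ * Real.exp (-b * x ^ 2)) atTop (nhds 0) := by
    simpa using (myaux_tendsto_exp_top hb).const_mul (-(2 * b)⁻¹)
  have hbot : Tendsto (fun x : ℝ => -(2 * b)⁻¹ * Real.exp (-b * x ^ 2)) atBot (nhds 0) := by
    simpa using (myaux_tendsto_exp_bot hb).const_mul (-(2 * b)⁻¹)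
  have := MeasureTheory.integral_of_hasDerivAt_of_tendsto hderiv
    (integrable_mul_exp_neg_mul_sq hb) hbot htop
  simpa using this

lemma myaux_integral_sq_exp {b : ℝ} (hb : 0 < b) :
    ∫ x : ℝ, x ^ 2 * Real.exp (-b * x ^ 2) = Real.sqrt (π / b) / (2 * b) := by
  have hderiv : ∀ x : ℝ, HasDerivAt (fun x : ℝ => x * Real.exp (-b * x ^ 2))
      (Real.exp (-b * x ^ 2) - 2 * b * (x ^ 2 * Real.exp (-b * x ^ 2))) x := by
    intro x
    convert (hasDerivAt_id x).mul (((hasDerivAt_pow 2 x).const_mul (-b)).exp) using 1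
    · rfl
    · rfl
    · rfl
    simp only [id_eq]
    ring
  have hint : Integrable (fun x : ℝ =>
      Real.exp (-b * x ^ 2) - 2 * b * (x ^ 2 * Real.exp (-b * x ^ 2))) := by
    exact (integrable_exp_neg_mul_sq hb).sub ((myaux_int_sq hb).const_mul (2 * b))
  have h0 := MeasureTheory.integral_of_hasDerivAt_of_tendsto hderiv hint
    (myaux_tendsto_mul_exp_bot hb) (myaux_tendsto_mul_exp_top hb)
  rw [sub_zero] at h0
  rw [MeasureTheory.integral_sub (integrable_exp_neg_mul_sq hb)
    ((myaux_int_sq hb).const_mul (2 * b)), integral_const_mul,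
    integral_gaussian] at h0
  have hb2 : (2 * b) ≠ 0 := by positivity
  field_simp at h0 ⊢
  linarith

lemma mypdf01 : gaussianPDFReal 0 1 =
    fun x => (Real.sqrt (2 * π))⁻¹ * Real.exp (-(1 / 2) * x ^ 2) := by
  ext x
  simp only [gaussianPDFReal, NNReal.coe_one, mul_one, sub_zero]
  congr 1
  ring

lemma mygauss_eq : gaussianReal 0 1
    = volume.withDensity fun x => ((gaussianPDFReal 0 1 x).toNNReal : ℝ≥0∞) := by
  rw [gaussianReal_of_var_ne_zero 0 one_ne_zero]
  rfl

lemma mypdf_meas : Measurable fun x => (gaussianPDFReal 0 1 x).toNNReal :=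
  (measurable_gaussianPDFReal 0 1).real_toNNReal

lemma myint_gauss (g : ℝ → ℝ) :
    ∫ x, g x ∂(gaussianReal 0 1) = ∫ x, gaussianPDFReal 0 1 x * g x := by
  rw [mygauss_eq, integral_withDensity_eq_integral_smul mypdf_meas]
  congr 1 with x
  rw [NNReal.smul_def, Real.coe_toNNReal _ (gaussianPDFReal_nonneg 0 1 x), smul_eq_mul]

lemma myintegrable_sq_gauss : Integrable (fun x : ℝ => x ^ 2) (gaussianReal 0 1) := by
  rw [mygauss_eq, integrable_withDensity_iff_integrable_smul mypdf_meas]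
  have h := ((myaux_int_sq (b := 1/2) (by norm_num)).const_mul (Real.sqrt (2 * π))⁻¹)
  apply h.congr
  filter_upwards with x
  simp only [NNReal.smul_def, smul_eq_mul]
  rw [Real.coe_toNNReal _ (gaussianPDFReal_nonneg 0 1 x), mypdf01]
  ring

lemma mymem2_gauss : MemLp (id : ℝ → ℝ) 2 (gaussianReal 0 1) := by
  rw [memLp_two_iff_integrable_sq aestronglyMeasurable_id]
  exact myintegrable_sq_gauss

lemma mymean_gauss : ∫ x, x ∂(gaussianReal 0 1) = 0 := by
  rw [myint_gauss (fun x => x), mypdf01]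
  have : (fun x : ℝ => (Real.sqrt (2 * π))⁻¹ * Real.exp (-(1 / 2) * x ^ 2) * x)
      = fun x : ℝ => (Real.sqrt (2 * π))⁻¹ * (x * Real.exp (-(1 / 2) * x ^ 2)) := by
    funext x; ring
  rw [this, integral_const_mul, myaux_integral_x_exp (by norm_num), mul_zero]

lemma mysq_gauss : ∫ x, x ^ 2 ∂(gaussianReal 0 1) = 1 := by
  rw [myint_gauss (fun x => x ^ 2), mypdf01]
  have : (fun x : ℝ => (Real.sqrt (2 * π))⁻¹ * Real.exp (-(1 / 2) * x ^ 2) * x ^ 2)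
      = fun x : ℝ => (Real.sqrt (2 * π))⁻¹ * (x ^ 2 * Real.exp (-(1 / 2) * x ^ 2)) := by
    funext x; ring
  rw [this, integral_const_mul, myaux_integral_sq_exp (by norm_num)]
  have h1 : π / (1 / 2 : ℝ) = 2 * π := by ring
  rw [h1]
  have h2 : (0:ℝ) < Real.sqrt (2 * π) := Real.sqrt_pos.mpr (by positivity)
  field_simp

end aux

/-- Convergence of the cylindrical Wiener series in a larger space: if `ι : U → U₁` is a
Hilbert–Schmidt operator (i.e. `Σ_j ‖ι(e_j)‖² < ∞` for a Hilbert basis `(e_j)` of `U`)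
and `(ξ_j)` are independent standard real Gaussians, then `Σ_j ξ_j · ι(e_j)` converges in
`L²(Ω; U₁)` to some `W₁` with `E‖W₁‖² = Σ_j ‖ι(e_j)‖² = ‖ι‖²_HS`. -/
theorem cylindrical_wiener_series_convergence
    {U : Type*} [NormedAddCommGroup U] [InnerProductSpace ℝ U] [CompleteSpace U]
    [SecondCountableTopology U]
    {U₁ : Type*} [NormedAddCommGroup U₁] [InnerProductSpace ℝ U₁] [CompleteSpace U₁]
    [SecondCountableTopology U₁]
    {Ω : Type*} [MeasurableSpace Ω] (P : Measure Ω) [IsProbabilityMeasure P]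
    (ι : U →L[ℝ] U₁)
    (e : HilbertBasis ℕ ℝ U)
    (hHS : Summable fun j => ‖ι (e j)‖ ^ 2)
    (ξ : ℕ → Ω → ℝ) (hmeas : ∀ j, Measurable (ξ j))
    (hindep : iIndepFun ξ P)
    (hgauss : ∀ j, Measure.map (ξ j) P = gaussianReal 0 1) :
    ∃ W₁ : Ω → U₁, AEStronglyMeasurable W₁ P ∧
      Tendsto (fun n => ∫ ω,
          ‖(∑ j ∈ Finset.range n, ξ j ω • ι (e j)) - W₁ ω‖ ^ 2 ∂P)
        atTop (nhds 0) ∧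
      ∫ ω, ‖W₁ ω‖ ^ 2 ∂P = ∑' j, ‖ι (e j)‖ ^ 2 := by
  -- moments of the ξ j
  have hmem2 : ∀ j, MemLp (ξ j) 2 P := by
    intro j
    have := (memLp_map_measure_iff aestronglyMeasurable_id (hmeas j).aemeasurable).mp
      (by rw [hgauss j]; exact mymem2_gauss)
    simpa [Function.id_comp] using this
  have hint : ∀ j, Integrable (ξ j) P := fun j => (hmem2 j).integrable one_le_two
  have hmean : ∀ j, ∫ ω, ξ j ω ∂P = 0 := by
    intro j
    have h := integral_map (μ := P) (hmeas j).aemeasurable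
      (f := fun x : ℝ => x) aestronglyMeasurable_id
    rw [hgauss j] at h
    rw [← h, mymean_gauss]
  have hsq : ∀ j, ∫ ω, ξ j ω ^ 2 ∂P = 1 := by
    intro j
    have h := integral_map (μ := P) (hmeas j).aemeasurable
      (f := fun x : ℝ => x ^ 2) (measurable_id.pow_const 2).aestronglyMeasurable
    rw [hgauss j] at h
    rw [← h, mysq_gauss]
  -- the summands as elements of L²(Ω; U₁)
  have hmemf : ∀ j, MemLp (fun ω => ξ j ω • ι (e j)) 2 P := fun j =>
    MemLp.smul (p := 2) (q := ⊤) (r := 2) (memLp_top_const (ι (e j))) (hmem2 j)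
  set g : ℕ → Lp U₁ 2 P := fun j => (hmemf j).toLp _ with hg
  have hinner : ∀ i j, (inner ℝ (g i) (g j) : ℝ)
      = (∫ ω, ξ i ω * ξ j ω ∂P) * inner ℝ (ι (e i)) (ι (e j)) := by
    intro i j
    rw [MeasureTheory.L2.inner_def]
    have h1 : (fun ω => (inner ℝ (g i ω) (g j ω) : ℝ))
        =ᵐ[P] fun ω => (ξ i ω * ξ j ω) * inner ℝ (ι (e i)) (ι (e j)) := by
      filter_upwards [(hmemf i).coeFn_toLp, (hmemf j).coeFn_toLp] with ω h1 h2
      rw [hg]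
      simp only [h1, h2]
      rw [real_inner_smul_left, real_inner_smul_right]
      ring
    rw [integral_congr_ae h1, integral_mul_const]
  have horth : ∀ i j, i ≠ j → (inner ℝ (g i) (g j) : ℝ) = 0 := by
    intro i j hij
    rw [hinner]
    have h := IndepFun.integral_mul_eq_mul_integral (hindep.indepFun hij) (hint i).1 (hint j).1
    have h2 : ∫ ω, ξ i ω * ξ j ω ∂P = 0 := by
      have : (fun ω => ξ i ω * ξ j ω) = ξ i * ξ j := rfl
      rw [this, h, hmean i, zero_mul]
    rw [h2, zero_mul]
  have hnormg : ∀ j, ‖g j‖ ^ 2 = ‖ι (e j)‖ ^ 2 := by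
    intro j
    rw [← real_inner_self_eq_norm_sq, hinner]
    have : (fun ω => ξ j ω * ξ j ω) = fun ω => ξ j ω ^ 2 := by funext ω; ring
    rw [this, hsq j, one_mul, real_inner_self_eq_norm_sq]
  -- orthogonal family machinery
  have hV : OrthogonalFamily ℝ (fun j => (ℝ ∙ g j : Submodule ℝ (Lp U₁ 2 P)))
      (fun j => (ℝ ∙ g j).subtypeₗᵢ) := by
    intro i j hij v w
    obtain ⟨a, ha⟩ := Submodule.mem_span_singleton.1 v.2
    obtain ⟨b, hb⟩ := Submodule.mem_span_singleton.1 w.2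
    have : (inner ℝ ((v : Lp U₁ 2 P)) ((w : Lp U₁ 2 P)) : ℝ) = 0 := by
      rw [← ha, ← hb, real_inner_smul_left, real_inner_smul_right, horth i j hij]
      ring
    simpa using this
  set l : ∀ j, (ℝ ∙ g j : Submodule ℝ (Lp U₁ 2 P)) :=
    fun j => ⟨g j, Submodule.mem_span_singleton_self _⟩ with hl
  have hnorml : ∀ j, ‖l j‖ = ‖g j‖ := fun j => rfl
  have hsummable : Summable g := by
    have h := (hV.summable_iff_norm_sq_summable l).2 (by
      simp only [hnorml]
      simp only [hnormg]
      exact hHS)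
    exact h
  set S : Lp U₁ 2 P := ∑' j, g j with hS
  have htend : Tendsto (fun n => ∑ j ∈ Finset.range n, g j) atTop (nhds S) :=
    hsummable.hasSum.tendsto_sum_nat
  -- coercion of finite sums
  have hcoe : ∀ s : Finset ℕ, (⇑(∑ j ∈ s, g j) : Ω → U₁)
      =ᵐ[P] fun ω => ∑ j ∈ s, ξ j ω • ι (e j) := by
    intro s
    induction s using Finset.induction_on with
    | empty =>
        simp only [Finset.sum_empty]
        exact Lp.coeFn_zero U₁ 2 P
    | @insert a s ha ih =>
        rw [Finset.sum_insert ha]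
        filter_upwards [Lp.coeFn_add (g a) (∑ j ∈ s, g j), (hmemf a).coeFn_toLp, ih]
          with ω h1 h2 h3
        rw [h1]
        simp only [Pi.add_apply, h2, h3, Finset.sum_insert ha]
        exact congrArg (· + ∑ j ∈ s, ξ j ω • ι (e j)) h2
  -- second moment = L² norm squared
  have hkey : ∀ (h : Lp U₁ 2 P) (φ : Ω → U₁), (⇑h : Ω → U₁) =ᵐ[P] φ →
      ∫ ω, ‖φ ω‖ ^ 2 ∂P = ‖h‖ ^ 2 := by
    intro h φ hφ
    rw [← real_inner_self_eq_norm_sq, MeasureTheory.L2.inner_def]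
    apply integral_congr_ae
    filter_upwards [hφ] with ω hω
    rw [← hω, real_inner_self_eq_norm_sq]
  refine ⟨⇑S, Lp.aestronglyMeasurable S, ?_, ?_⟩
  · have heq : (fun n => ∫ ω,
        ‖(∑ j ∈ Finset.range n, ξ j ω • ι (e j)) - S ω‖ ^ 2 ∂P)
        = fun n => ‖(∑ j ∈ Finset.range n, g j) - S‖ ^ 2 := by
      funext n
      apply hkey
      filter_upwards [Lp.coeFn_sub (∑ j ∈ Finset.range n, g j) S, hcoe (Finset.range n)]
        with ω h1 h2
      rw [h1]
      simp only [Pi.sub_apply, h2]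
    rw [heq]
    have h := ((htend.sub_const S).norm.pow 2)
    simpa using h
  · rw [hkey S (⇑S) (Filter.EventuallyEq.refl _ _)]
    have h1 : Tendsto (fun n => ‖∑ j ∈ Finset.range n, g j‖ ^ 2) atTop
        (nhds (‖S‖ ^ 2)) := htend.norm.pow 2
    have h2 : (fun n => ‖∑ j ∈ Finset.range n, g j‖ ^ 2)
        = fun n => ∑ j ∈ Finset.range n, ‖ι (e j)‖ ^ 2 := by
      funext n
      have := hV.norm_sum l (Finset.range n)
      simp only [hnorml] at this
      simp only [Submodule.coe_subtypeₗᵢ, Submodule.coe_subtype] at this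
      rw [show (∑ j ∈ Finset.range n, ((l j : Lp U₁ 2 P))) = ∑ j ∈ Finset.range n, g j
        from rfl] at this
      rw [this]
      exact Finset.sum_congr rfl fun j _ => hnormg j
    rw [h2] at h1
    exact tendsto_nhds_unique h1 hHS.hasSum.tendsto_sum_nat
end
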